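/- Every inclusion-wise minimal strongly connected spanning subgraph of a strongly connected digraph on n vertices has at most 2n - 2 edges. -/

import Mathlib

/-- A digraph (given by its arc set) is strongly connected. -/
def StronglyConnected {V : Type*} (A : Set (V × V)) : Prop :=
  ∀ u v : V, Relation.ReflTransGen (fun x y => (x, y) ∈ A) u v

open Classical in
/-- bounded-length reachability -/
def reachN {V : Type*} (R : V → V → Prop) : ℕ → V → V → Prop
  | 0, u, v => u = v
  | n+1, u, v => reachN R n u v ∨ ∃ w, reachN R n u w ∧ R w v

lemma reachN_of_rtg {V : Type*} {R : V → V → Prop} {u v : V}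
    (h : Relation.ReflTransGen R u v) : ∃ n, reachN R n u v := by
  induction h with
  | refl => exact ⟨0, rfl⟩
  | tail _ hwv ih => obtain ⟨n, hn⟩ := ih; exact ⟨n+1, Or.inr ⟨_, hn, hwv⟩⟩

lemma rtg_of_reachN {V : Type*} {R : V → V → Prop} {u v : V} {n : ℕ}
    (h : reachN R n u v) : Relation.ReflTransGen R u v := by
  induction n generalizing v with
  | zero => cases h; exact .refl
  | succ n ih =>
    rcases h with h | ⟨w, hw, hwv⟩
    · exact ih h
    · exact (ih hw).tail hwv

open Classical in
/-- From full reachability from a root `r`, extract a "parent" function whose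
arcs form an out-arborescence. -/
lemma exists_pred {V : Type*} (R : V → V → Prop) (r : V)
    (hcon : ∀ v : V, Relation.ReflTransGen R r v) :
    ∃ p : V → V, (∀ v, v ≠ r → R (p v) v) ∧
      ∀ v : V, Relation.ReflTransGen (fun x y => y ≠ r ∧ x = p y) r v := by
  have hex : ∀ v, ∃ n, reachN R n r v := fun v => reachN_of_rtg (hcon v)
  let d : V → ℕ := fun v => Nat.find (hex v)
  have hd : ∀ v, reachN R (d v) r v := fun v => Nat.find_spec (hex v)
  have key : ∀ v, v ≠ r → ∃ w, R w v ∧ d w < d v := by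
    intro v hv
    have hd0 : d v ≠ 0 := by
      intro h0
      have := hd v
      rw [h0] at this
      exact hv this.symm
    obtain ⟨k, hk⟩ : ∃ k, d v = k + 1 := ⟨d v - 1, by omega⟩
    have hs := hd v
    rw [hk] at hs
    rcases hs with hs | ⟨w, hw, hwv⟩
    · exact absurd hs (Nat.find_min (hex v) (by show k < d v; rw [hk]; exact k.lt_succ_self))
    · exact ⟨w, hwv, Nat.lt_of_le_of_lt (Nat.find_le hw) (by rw [hk]; exact k.lt_succ_self)⟩
  let p : V → V := fun v => if h : v = r then r else Classical.choose (key v h)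
  have hp1 : ∀ v, v ≠ r → R (p v) v := by
    intro v hv; simp only [p, dif_neg hv]
    exact (Classical.choose_spec (key v hv)).1
  have hp2 : ∀ v, v ≠ r → d (p v) < d v := by
    intro v hv; simp only [p, dif_neg hv]
    exact (Classical.choose_spec (key v hv)).2
  refine ⟨p, hp1, ?_⟩
  intro v
  have : ∀ n v, d v ≤ n → Relation.ReflTransGen (fun x y => y ≠ r ∧ x = p y) r v := by
    intro n
    induction n with
    | zero =>
      intro v hv
      by_cases h : v = r
      · subst h; exact .refl
      · exact absurd (hp2 v h) (by omega)
    | succ n ih =>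
      intro v hv
      by_cases h : v = r
      · subst h; exact .refl
      · exact (ih (p v) (by have := hp2 v h; omega)).tail ⟨h, rfl⟩
  exact this (d v) v le_rfl

theorem stmt3 {V : Type*} [Fintype V] (A H : Set (V × V))
    (hA : StronglyConnected A) (hHA : H ⊆ A)
    (hH : StronglyConnected H)
    (hmin : ∀ H' : Set (V × V), H' ⊂ H → ¬ StronglyConnected H') :
    H.ncard ≤ 2 * Fintype.card V - 2 := by
  by_cases hV : Nonempty V
  case neg =>
    have : H = ∅ := by
      ext x; simp only [Set.mem_empty_iff_false, iff_false]
      intro _; exact hV ⟨x.1⟩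
    simp [this]
  obtain ⟨r⟩ := hV
  -- out-arborescence
  obtain ⟨p, hp1, hp2⟩ := exists_pred (fun x y => (x, y) ∈ H) r (hH r)
  -- in-arborescence (on the reversed relation)
  obtain ⟨q, hq1, hq2⟩ := exists_pred (fun x y => (y, x) ∈ H) r (fun v => (hH v r).swap)
  set O : Set (V × V) := (fun v => (p v, v)) '' {v | v ≠ r} with hO
  set I : Set (V × V) := (fun v => (v, q v)) '' {v | v ≠ r} with hI
  have hOmem : ∀ x y : V, (x, y) ∈ O ↔ y ≠ r ∧ x = p y := by
    intro x y
    constructor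
    · rintro ⟨v, hv, heq⟩
      obtain ⟨h1, h2⟩ := Prod.mk.injEq .. ▸ heq
      subst h2; exact ⟨hv, h1.symm⟩
    · rintro ⟨h1, h2⟩; exact ⟨y, h1, by simp [h2]⟩
  have hImem : ∀ x y : V, (x, y) ∈ I ↔ x ≠ r ∧ y = q x := by
    intro x y
    constructor
    · rintro ⟨v, hv, heq⟩
      obtain ⟨h1, h2⟩ := Prod.mk.injEq .. ▸ heq
      subst h1; exact ⟨hv, h2.symm⟩
    · rintro ⟨h1, h2⟩; exact ⟨x, h1, by simp [h2]⟩
  have hsubO : O ⊆ H := by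
    rintro ⟨x, y⟩ hxy
    obtain ⟨h1, h2⟩ := (hOmem x y).1 hxy
    subst h2; exact hp1 y h1
  have hsubI : I ⊆ H := by
    rintro ⟨x, y⟩ hxy
    obtain ⟨h1, h2⟩ := (hImem x y).1 hxy
    subst h2; exact hq1 x h1
  have hsub : O ∪ I ⊆ H := Set.union_subset hsubO hsubI
  have hSC : StronglyConnected (O ∪ I) := by
    intro u v
    have h1 : Relation.ReflTransGen (fun x y => (x, y) ∈ O ∪ I) u r := by
      have := (hq2 u).swap
      refine Relation.ReflTransGen.mono ?_ _ _ this
      rintro a b ⟨h1, h2⟩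
      exact Or.inr ((hImem a b).2 ⟨h1, h2⟩)
    have h2 : Relation.ReflTransGen (fun x y => (x, y) ∈ O ∪ I) r v := by
      refine Relation.ReflTransGen.mono ?_ _ _ (hp2 v)
      rintro a b ⟨h1, h2⟩
      exact Or.inl ((hOmem a b).2 ⟨h1, h2⟩)
    exact h1.trans h2
  have heq : O ∪ I = H := by
    by_contra hne
    exact hmin (O ∪ I) ⟨hsub, fun h => hne (le_antisymm hsub h)⟩ hSC
  have hcardset : ({v : V | v ≠ r}).ncard = Fintype.card V - 1 := by
    have h1 : ({v : V | v ≠ r}) = ({r} : Set V)ᶜ := by ext v; simp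
    have h2 := Set.ncard_add_ncard_compl ({r} : Set V)
    rw [h1]
    simp only [Set.ncard_singleton] at h2
    rw [Nat.card_eq_fintype_card] at h2
    omega
  have hOcard : O.ncard ≤ Fintype.card V - 1 := by
    rw [hO, ← hcardset]; exact Set.ncard_image_le (Set.toFinite _)
  have hIcard : I.ncard ≤ Fintype.card V - 1 := by
    rw [hI, ← hcardset]; exact Set.ncard_image_le (Set.toFinite _)
  have hunion : (O ∪ I).ncard ≤ O.ncard + I.ncard :=
    Set.ncard_union_le O I
  have hn : 1 ≤ Fintype.card V := Fintype.card_pos_iff.2 ⟨r⟩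
  rw [← heq]
  omega
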